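/- Let η', ζ', ζ ∈ {+1,-1} and Y', Z', Z ∈ ℝ with (η', Y') ≠ (+1, 0). Then the equation max[Y' + S(η'), Z + Z' + S(-ζ'ζ)] = max[Y' + S(-η'), Z + Z' + S(ζ'ζ), 0] holds if and only if Z + Z' = max(Y', 0) and ζ'ζ = η' if Y' > 0, ζ'ζ = -1 if Y' ≤ 0. -/

import Mathlib

/-- Sign-encoding function `S : {+1,-1} → {0,-∞}` (values in the extended reals). -/
noncomputable def S (ω : ℝ) : EReal := if ω = 1 then 0 else ⊥

lemma ecoe_max (a b : ℝ) : ((max a b : ℝ) : EReal) = max (a : EReal) (b : EReal) :=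
  EReal.coe_strictMono.monotone.map_max

theorem stmt4 (η' ζ' ζ : ℝ) (hη' : η' = 1 ∨ η' = -1) (hζ' : ζ' = 1 ∨ ζ' = -1)
    (hζ : ζ = 1 ∨ ζ = -1) (Y' Z' Z : ℝ) (hne : ¬ (η' = 1 ∧ Y' = 0)) :
    (max (((Y' : ℝ) : EReal) + S η') (((Z + Z' : ℝ) : EReal) + S (-(ζ' * ζ)))
      = max (((Y' : ℝ) : EReal) + S (-η'))
        (max (((Z + Z' : ℝ) : EReal) + S (ζ' * ζ)) (0 : EReal)))
    ↔ (Z + Z' = max Y' 0 ∧ ζ' * ζ = if 0 < Y' then η' else -1) := by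
  have hp : ζ' * ζ = 1 ∨ ζ' * ζ = -1 := by
    rcases hζ' with h | h <;> rcases hζ with h2 | h2 <;> simp [h, h2]
  have key : ∀ a b : ℝ, ((a : EReal) = (b : EReal) ⊔ 0 ↔ a = b ⊔ 0) := by
    intro a b
    rw [show ((0:EReal) = ((0:ℝ):EReal)) from rfl, ← ecoe_max, EReal.coe_eq_coe_iff]
  rcases hη' with hη | hη <;> rcases hp with hp | hp <;>
    simp only [hη, hp, S, hne] <;> norm_num
  · -- ↑Y' = (↑Z + ↑Z') ⊔ 0 ↔ Z + Z' = Y' ⊔ 0 ∧ 1 = if 0 < Y' then 1 else -1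
    have hY : Y' ≠ 0 := fun h => hne ⟨hη, h⟩
    rw [show ((Z:EReal) + (Z':EReal)) = ((Z+Z' : ℝ):EReal) from (EReal.coe_add _ _).symm,
      key]
    rcases lt_trichotomy Y' 0 with h | h | h
    · simp only [not_lt.mpr h.le, and_false]
      constructor
      · intro he; exfalso; have := le_max_right (Z+Z') (0:ℝ); rw [← he] at this; linarith
      · rintro ⟨⟩
    · exact absurd h hY
    · simp only [h, and_true, max_eq_left h.le]
      constructor
      · intro he
        rcases le_or_gt (Z+Z') 0 with h2 | h2
        · rw [max_eq_right h2] at he; exact absurd he hY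
        · rw [max_eq_left h2.le] at he; exact he.symm
      · intro he; rw [he, max_eq_left h.le]
  · -- ↑Y' ⊔ (↑Z + ↑Z') = 0 ↔ ...
    have hY : Y' ≠ 0 := fun h => hne ⟨hη, h⟩
    rw [show ((Z:EReal) + (Z':EReal)) = ((Z+Z' : ℝ):EReal) from (EReal.coe_add _ _).symm,
      ← ecoe_max, show ((0:EReal) = ((0:ℝ):EReal)) from rfl, EReal.coe_eq_coe_iff]
    rcases lt_trichotomy Y' 0 with h | h | h
    · simp only [h.le, and_true, max_eq_right (h.le.trans (le_max_right Y' 0))]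
      rw [max_eq_right h.le]
      constructor
      · intro he
        rcases le_or_gt (Z+Z') Y' with h2 | h2
        · rw [max_eq_left h2] at he; exact absurd he hY
        · rw [max_eq_right h2.le] at he; exact he
      · intro he; rw [he, max_eq_right h.le]
    · exact absurd h hY
    · simp only [not_le.mpr h]
      constructor
      · intro he; exfalso
        have := le_max_left Y' (Z+Z'); rw [he] at this; linarith
      · rintro ⟨-, he⟩; norm_num at he
  · -- ¬⊥ = ↑Y' ⊔ ((↑Z + ↑Z') ⊔ 0)
    intro h
    have : (0:EReal) ≤ ⊥ := h ▸ le_sup_of_le_right le_sup_right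
    simp at this
  · -- ↑Z + ↑Z' = ↑Y' ⊔ 0 ↔ Z + Z' = Y' ⊔ 0
    rw [show ((Z:EReal) + (Z':EReal)) = ((Z+Z' : ℝ):EReal) from (EReal.coe_add _ _).symm, key]
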